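/- For all integers n ≥ 2 and m ≥ 2, one has the identity of integers Σ_{h=1}^{n} (−1)^{h−1} · C(n,h) · C((n−h)(m−1), n−1) = C(n(m−1), n−1), where C(a,b) denotes the binomial coefficient with the convention C(a,b) = 0 whenever a < b. -/
import Mathlib

open Polynomial Finset
open scoped fwdDiff

private lemma comp_lemmas (P : Polynomial ℤ) (hP0 : P ≠ 0) :
    (P.comp (X + 1)).degree = P.degree ∧ (P.comp (X + 1)).leadingCoeff = P.leadingCoeff
      ∧ P.comp (X + 1) ≠ 0 := by
  have hX1 : (X + 1 : Polynomial ℤ).natDegree = 1 := by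
    simpa using Polynomial.natDegree_X_add_C (1:ℤ)
  have hlc : (P.comp (X + 1)).leadingCoeff = P.leadingCoeff := by
    rcases eq_or_ne P.natDegree 0 with h0 | h0
    · rw [Polynomial.eq_C_of_natDegree_eq_zero h0]; simp
    · rw [Polynomial.leadingCoeff_comp (by rw [hX1]; exact one_ne_zero)]
      have : (X + 1 : Polynomial ℤ).leadingCoeff = 1 := by
        simpa using Polynomial.leadingCoeff_X_add_C (1:ℤ)
      rw [this, one_pow, mul_one]
  have hne : P.comp (X + 1) ≠ 0 := by
    intro h
    have := hlc
    rw [h, Polynomial.leadingCoeff_zero] at this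
    exact hP0 (Polynomial.leadingCoeff_eq_zero.mp this.symm)
  have hnat : (P.comp (X + 1)).natDegree = P.natDegree := by
    rw [Polynomial.natDegree_comp, hX1, mul_one]
  exact ⟨by rw [Polynomial.degree_eq_natDegree hne, Polynomial.degree_eq_natDegree hP0, hnat], hlc, hne⟩

private lemma fwdDiff_poly_eq_zero (n : ℕ) (P : Polynomial ℤ) (hP : P.degree < n) :
    (Δ_[(1:ℕ)])^[n] (fun k : ℕ => P.eval (k : ℤ)) = 0 := by
  induction n generalizing P with
  | zero =>
    have h0 : P = 0 := by
      rw [← Polynomial.degree_eq_bot]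
      simpa using hP
    funext k
    simp [h0]
  | succ n ih =>
    rw [Function.iterate_succ_apply]
    have hΔ : fwdDiff (1:ℕ) (fun k : ℕ => P.eval (k : ℤ))
        = fun k : ℕ => (P.comp (X + 1) - P).eval (k : ℤ) := by
      funext k
      simp only [fwdDiff, Polynomial.eval_sub, Polynomial.eval_comp, Polynomial.eval_add,
        Polynomial.eval_X, Polynomial.eval_one]
      push_cast
      ring_nf
    rw [hΔ]
    apply ih
    rcases eq_or_ne P 0 with rfl | hP0
    · simp only [Polynomial.zero_comp, zero_sub, Polynomial.degree_neg, Polynomial.degree_zero]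
      exact_mod_cast WithBot.bot_lt_coe n
    · obtain ⟨hdeg, hlc, hne⟩ := comp_lemmas P hP0
      have hlt := lt_of_lt_of_le (Polynomial.degree_sub_lt hdeg hne hlc) (le_of_eq hdeg)
      have hnd : P.natDegree < n + 1 :=
        (Polynomial.natDegree_lt_iff_degree_lt hP0).mpr (by exact_mod_cast hP)
      have hle : P.degree ≤ (n : WithBot ℕ) := by
        refine le_trans P.degree_le_natDegree ?_
        exact_mod_cast Nat.lt_succ_iff.mp hnd
      exact lt_of_lt_of_le hlt hle

theorem stmt_0 (n m : ℕ) (hn : 2 ≤ n) (hm : 2 ≤ m) :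
    ∑ h ∈ Finset.Icc 1 n,
      (-1 : ℤ) ^ (h - 1) * (n.choose h : ℤ) * (((n - h) * (m - 1)).choose (n - 1) : ℤ)
      = ((n * (m - 1)).choose (n - 1) : ℤ) := by
  set P : Polynomial ℤ :=
    (descPochhammer ℤ (n-1)).comp (Polynomial.C ((m:ℤ)-1) * (Polynomial.C (n:ℤ) - X)) with hPdef
  have hdeg : P.degree < n := by
    have h1 : (Polynomial.C ((m:ℤ)-1) * (Polynomial.C (n:ℤ) - X)).natDegree ≤ 1 := by
      refine le_trans (Polynomial.natDegree_mul_le) ?_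
      have ha : (Polynomial.C ((m:ℤ)-1)).natDegree = 0 := Polynomial.natDegree_C _
      have hb : (Polynomial.C (n:ℤ) - X).natDegree ≤ 1 := by
        refine le_trans (Polynomial.natDegree_sub_le _ _) ?_
        simp
      omega
    have h2 : P.natDegree ≤ (n-1) * 1 := by
      refine le_trans (Polynomial.natDegree_comp_le) ?_
      exact Nat.mul_le_mul (le_of_eq (descPochhammer_natDegree (R:=ℤ) (n-1))) h1
    have h3 : P.natDegree < n := by omega
    exact lt_of_le_of_lt P.degree_le_natDegree (by exact_mod_cast h3)
  have heval : ∀ k ∈ Finset.range (n+1),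
      P.eval (k : ℤ) = (Nat.factorial (n-1) : ℤ) * (((n - k) * (m - 1)).choose (n - 1) : ℤ) := by
    intro k hk
    rw [Finset.mem_range] at hk
    have hkn : k ≤ n := by omega
    have harg : ((m:ℤ)-1) * ((n:ℤ) - k) = (((n - k) * (m - 1) : ℕ) : ℤ) := by
      push_cast [Nat.cast_sub hkn, Nat.cast_sub (by omega : 1 ≤ m)]
      ring
    rw [hPdef]
    simp only [Polynomial.eval_comp, Polynomial.eval_mul, Polynomial.eval_C,
      Polynomial.eval_sub, Polynomial.eval_X]
    rw [harg, descPochhammer_eval_eq_descFactorial,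
      Nat.descFactorial_eq_factorial_mul_choose]
    push_cast; ring
  have hzero := fwdDiff_poly_eq_zero n P hdeg
  have hsum := fwdDiff_iter_eq_sum_shift (1:ℕ) (fun k : ℕ => P.eval (k:ℤ)) n 0
  rw [hzero] at hsum
  simp only [Pi.zero_apply, zero_add, smul_eq_mul, Nat.smul_one_eq_cast, mul_one] at hsum
  have h2 : ∑ k ∈ Finset.range (n+1),
      (-1:ℤ)^(n-k) * (n.choose k : ℤ) *
        ((Nat.factorial (n-1) : ℤ) * (((n - k) * (m - 1)).choose (n - 1) : ℤ)) = 0 := by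
    refine Eq.trans (Finset.sum_congr rfl fun k hk => ?_) hsum.symm
    rw [heval k hk]
  have key : ∑ k ∈ Finset.range (n+1),
      (-1:ℤ)^k * (n.choose k : ℤ) * (((n - k) * (m - 1)).choose (n - 1) : ℤ) = 0 := by
    have h3 : (Nat.factorial (n-1) : ℤ) * ((-1:ℤ)^n *
        ∑ k ∈ Finset.range (n+1),
          (-1:ℤ)^k * (n.choose k : ℤ) * (((n - k) * (m - 1)).choose (n - 1) : ℤ)) = 0 := by
      rw [← h2, Finset.mul_sum, Finset.mul_sum]
      apply Finset.sum_congr rfl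
      intro k hk
      rw [Finset.mem_range] at hk
      have hkn : k ≤ n := by omega
      have hsq : (-1:ℤ)^k * (-1:ℤ)^k = 1 := by
        rw [← pow_add, ← two_mul, pow_mul]
        simp
      have hsign : (-1:ℤ)^(n-k) = (-1:ℤ)^n * (-1:ℤ)^k := by
        have hprod : (-1:ℤ)^(n-k) * (-1:ℤ)^k = (-1:ℤ)^n := by
          rw [← pow_add]
          congr 1
          omega
        calc (-1:ℤ)^(n-k) = (-1:ℤ)^(n-k) * ((-1:ℤ)^k * (-1:ℤ)^k) := by rw [hsq, mul_one]
          _ = (-1:ℤ)^n * (-1:ℤ)^k := by rw [← mul_assoc, hprod]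
      rw [hsign]; ring
    have hfac : (Nat.factorial (n-1) : ℤ) ≠ 0 := by
      exact_mod_cast Nat.factorial_ne_zero _
    have hsig : ((-1:ℤ)^n) ≠ 0 := by
      intro h
      exact absurd (pow_eq_zero_iff (by omega : n ≠ 0) |>.mp h) (by norm_num)
    rcases mul_eq_zero.mp h3 with h | h
    · exact absurd h hfac
    · rcases mul_eq_zero.mp h with h' | h'
      · exact absurd h' hsig
      · exact h'
  have hins : Finset.range (n+1) = insert 0 (Finset.Icc 1 n) := by
    ext k
    simp only [Finset.mem_range, Finset.mem_insert, Finset.mem_Icc]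
    omega
  rw [hins, Finset.sum_insert (by simp)] at key
  simp only [pow_zero, Nat.choose_zero_right, Nat.cast_one, one_mul, Nat.sub_zero] at key
  have hrw : ∀ h ∈ Finset.Icc 1 n,
      (-1:ℤ)^(h-1) * (n.choose h : ℤ) * (((n - h) * (m - 1)).choose (n - 1) : ℤ)
      = -((-1:ℤ)^h * (n.choose h : ℤ) * (((n - h) * (m - 1)).choose (n - 1) : ℤ)) := by
    intro h hh
    rw [Finset.mem_Icc] at hh
    have hrepl : h = (h - 1) + 1 := by omega
    rw [hrepl, pow_succ]
    simp only [Nat.add_sub_cancel]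
    ring
  rw [Finset.sum_congr rfl hrw]
  have : ∑ h ∈ Finset.Icc 1 n,
      -((-1:ℤ)^h * (n.choose h : ℤ) * (((n - h) * (m - 1)).choose (n - 1) : ℤ))
      = -∑ h ∈ Finset.Icc 1 n,
        ((-1:ℤ)^h * (n.choose h : ℤ) * (((n - h) * (m - 1)).choose (n - 1) : ℤ)) := by
    rw [Finset.sum_neg_distrib]
  rw [this]
  linarith [key]
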